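/- In a Hom-Hopf algebra (H, μ, Δ, ε, S, α), the antipode S is an anti-algebra map and anti-coalgebra map: S(gh) = S(h)S(g), S(1) = 1, Δ(S(h)) = S(h₂) ⊗ S(h₁), and ε∘S = ε. -/

import Mathlib

open scoped TensorProduct BigOperators

universe u v

/-- A Hom-Hopf algebra over a field `k`, with a chosen Sweedler-type
decomposition (`Idx`, `T`, `d1`, `d2`) of the comultiplication:
`comul h = ∑ i ∈ T h, d1 h i ⊗ₜ d2 h i`.  The structure map `α` is assumed
bijective (a linear equivalence), as throughout the paper. -/
structure HomHopf (k : Type u) (H : Type v) [Field k] [AddCommGroup H] [Module k H] where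
  mul : H →ₗ[k] H →ₗ[k] H
  one : H
  α : H ≃ₗ[k] H
  comul : H →ₗ[k] H ⊗[k] H
  counit : H →ₗ[k] k
  S : H →ₗ[k] H
  Idx : Type v
  T : H → Finset Idx
  d1 : H → Idx → H
  d2 : H → Idx → H
  repr : ∀ h, comul h = ∑ i ∈ T h, d1 h i ⊗ₜ[k] d2 h i
  α_one : α one = one
  α_mul : ∀ x y, α (mul x y) = mul (α x) (α y)
  one_mul : ∀ x, mul one x = α x
  mul_one : ∀ x, mul x one = α x
  hom_assoc : ∀ x y z, mul (α x) (mul y z) = mul (mul x y) (α z)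
  counit_α : ∀ h, counit (α h) = counit h
  comul_α : ∀ h, comul (α h) = ∑ i ∈ T h, α (d1 h i) ⊗ₜ[k] α (d2 h i)
  counit_left : ∀ h, ∑ i ∈ T h, counit (d1 h i) • d2 h i = α h
  counit_right : ∀ h, ∑ i ∈ T h, counit (d2 h i) • d1 h i = α h
  hom_coassoc : ∀ h,
    (TensorProduct.assoc k H H H) (∑ i ∈ T h, comul (d1 h i) ⊗ₜ[k] α (d2 h i))
      = ∑ i ∈ T h, α (d1 h i) ⊗ₜ[k] comul (d2 h i)
  counit_one : counit one = 1
  counit_mul : ∀ x y, counit (mul x y) = counit x * counit y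
  comul_one : comul one = one ⊗ₜ[k] one
  comul_mul : ∀ x y, comul (mul x y)
      = ∑ i ∈ T x, ∑ j ∈ T y, mul (d1 x i) (d1 y j) ⊗ₜ[k] mul (d2 x i) (d2 y j)
  S_α : ∀ h, S (α h) = α (S h)
  S_left : ∀ h, ∑ i ∈ T h, mul (S (d1 h i)) (d2 h i) = counit h • one
  S_right : ∀ h, ∑ i ∈ T h, mul (d1 h i) (S (d2 h i)) = counit h • one

/-- A unital Hom-associative algebra with bijective structure map. -/
structure HomAlg (k : Type u) (A : Type v) [Field k] [AddCommGroup A] [Module k A] where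
  mul : A →ₗ[k] A →ₗ[k] A
  one : A
  β : A ≃ₗ[k] A
  β_one : β one = one
  β_mul : ∀ x y, β (mul x y) = mul (β x) (β y)
  one_mul : ∀ x, mul one x = β x
  mul_one : ∀ x, mul x one = β x
  hom_assoc : ∀ x y z, mul (β x) (mul y z) = mul (mul x y) (β z)

namespace HomHopf

variable {k : Type u} {H : Type v} [Field k] [AddCommGroup H] [Module k H] (HH : HomHopf k H)

/-- inverse structure map as linear map -/
noncomputable def Ai : H →ₗ[k] H := HH.α.symm.toLinearMap

@[simp] lemma Ai_apply (h : H) : HH.Ai h = HH.α.symm h := rfl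

@[simp] lemma Ai_α (h : H) : HH.Ai (HH.α h) = h := HH.α.symm_apply_apply h
@[simp] lemma α_Ai (h : H) : HH.α (HH.Ai h) = h := HH.α.apply_symm_apply h

@[simp] lemma symm_one : HH.α.symm HH.one = HH.one := by
  have := HH.α_one
  conv_lhs => rw [← this]
  exact HH.α.symm_apply_apply _

lemma Ai_one : HH.Ai HH.one = HH.one := by simp

lemma Ai_mul (x y : H) : HH.Ai (HH.mul x y) = HH.mul (HH.Ai x) (HH.Ai y) := by
  apply HH.α.injective
  simp [HH.α_mul]

@[simp] lemma counit_symm (h : H) : HH.counit (HH.α.symm h) = HH.counit h := by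
  conv_rhs => rw [← HH.α.apply_symm_apply h, HH.counit_α]

lemma counit_Ai (h : H) : HH.counit (HH.Ai h) = HH.counit h := by simp

lemma S_Ai (h : H) : HH.S (HH.Ai h) = HH.Ai (HH.S h) := by
  apply HH.α.injective
  rw [← HH.S_α]; simp

/-- normalized multiplication: `nmu x y = mul (α⁻¹ x) (α⁻¹ y)`; associative with unit `one`. -/
noncomputable def nmu : H →ₗ[k] H →ₗ[k] H := (HH.mul.comp HH.Ai).compl₂ HH.Ai

@[simp] lemma nmu_apply (x y : H) : HH.nmu x y = HH.mul (HH.Ai x) (HH.Ai y) := rfl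

lemma nmu_one (x : H) : HH.nmu x HH.one = x := by
  simp [HH.Ai_one, HH.mul_one]

lemma one_nmu (x : H) : HH.nmu HH.one x = x := by
  simp [HH.Ai_one, HH.one_mul]

lemma nmu_assoc (x y z : H) : HH.nmu (HH.nmu x y) z = HH.nmu x (HH.nmu y z) := by
  simp only [nmu_apply, Ai_mul]
  have h1 : HH.Ai z = HH.α (HH.Ai (HH.Ai z)) := by simp
  conv_lhs => rw [h1]
  rw [← HH.hom_assoc]
  simp

lemma counit_nmu (x y : H) : HH.counit (HH.nmu x y) = HH.counit x * HH.counit y := by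
  simp [HH.counit_mul, HH.counit_Ai]

/-- normalized comultiplication -/
noncomputable def nD : H →ₗ[k] H ⊗[k] H := HH.comul.comp HH.Ai

@[simp] lemma nD_apply (h : H) : HH.nD h = HH.comul (HH.α.symm h) := rfl

/-- index set for decomposition of `nD` -/
def sa (x : H) : Finset HH.Idx := HH.T (HH.α.symm x)
/-- first legs -/
def aa (x : H) (i : HH.Idx) : H := HH.d1 (HH.α.symm x) i
/-- second legs -/
def bb (x : H) (i : HH.Idx) : H := HH.d2 (HH.α.symm x) i

lemma Drepr (x : H) : HH.nD x = ∑ i ∈ HH.sa x, HH.aa x i ⊗ₜ[k] HH.bb x i := HH.repr _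

lemma comul_map (h : H) :
    HH.comul (HH.α h) = TensorProduct.map HH.α.toLinearMap HH.α.toLinearMap (HH.comul h) := by
  rw [HH.comul_α, HH.repr h, map_sum]
  simp

lemma comul_Ai (h : H) :
    HH.comul (HH.α.symm h) = TensorProduct.map HH.Ai HH.Ai (HH.comul h) := by
  apply (TensorProduct.congr HH.α HH.α).injective
  have : ∀ t, (TensorProduct.congr HH.α HH.α) t
      = TensorProduct.map HH.α.toLinearMap HH.α.toLinearMap t := fun t => rfl
  rw [this, this, ← comul_map, HH.α.apply_symm_apply,
    ← LinearMap.comp_apply, ← TensorProduct.map_comp]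
  have hc : HH.α.toLinearMap ∘ₗ HH.Ai = LinearMap.id := by ext z; simp
  rw [hc, TensorProduct.map_id, LinearMap.id_apply]

lemma nD_eq_map (h : H) : HH.nD h = TensorProduct.map HH.Ai HH.Ai (HH.comul h) := by
  simpa using HH.comul_Ai h

/-- counit-left for normalized coproduct -/
lemma CL (h : H) : ∑ i ∈ HH.sa h, HH.counit (HH.aa h i) • HH.bb h i = h := by
  have := HH.counit_left (HH.α.symm h)
  simpa [sa, aa, bb] using this

/-- counit-right for normalized coproduct -/
lemma CR (h : H) : ∑ i ∈ HH.sa h, HH.counit (HH.bb h i) • HH.aa h i = h := by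
  have := HH.counit_right (HH.α.symm h)
  simpa [sa, aa, bb] using this


open TensorProduct

/-- lifted normalized multiplication -/
noncomputable def nM : H ⊗[k] H →ₗ[k] H := TensorProduct.lift HH.nmu

@[simp] lemma nM_tmul (x y : H) : HH.nM (x ⊗ₜ[k] y) = HH.nmu x y := rfl

/-- componentwise multiplication on `H ⊗ H` -/
noncomputable def nmm : (H ⊗[k] H) ⊗[k] (H ⊗[k] H) →ₗ[k] H ⊗[k] H :=
  (TensorProduct.map HH.nM HH.nM).comp (TensorProduct.tensorTensorTensorComm k H H H H).toLinearMap

@[simp] lemma nmm_tmul (a b c d : H) :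
    HH.nmm ((a ⊗ₜ[k] b) ⊗ₜ[k] (c ⊗ₜ[k] d)) = HH.nmu a c ⊗ₜ[k] HH.nmu b d := by
  simp [nmm]

/-- curried componentwise multiplication on `H ⊗ H` -/
noncomputable def P2 : H ⊗[k] H →ₗ[k] H ⊗[k] H →ₗ[k] H ⊗[k] H :=
  (TensorProduct.mk k (H ⊗[k] H) (H ⊗[k] H)).compr₂ HH.nmm

@[simp] lemma P2_apply (u v : H ⊗[k] H) : HH.P2 u v = HH.nmm (u ⊗ₜ[k] v) := rfl

lemma P2_tmul (a b c d : H) :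
    HH.P2 (a ⊗ₜ[k] b) (c ⊗ₜ[k] d) = HH.nmu a c ⊗ₜ[k] HH.nmu b d := by simp

lemma nD_one : HH.nD HH.one = HH.one ⊗ₜ[k] HH.one := by
  simp [HH.comul_one]

/-- the lifted "`S` on the left then multiply" map -/
noncomputable def L1 : H ⊗[k] H →ₗ[k] H := TensorProduct.lift (HH.nmu.comp HH.S)

@[simp] lemma L1_tmul (x y : H) : HH.L1 (x ⊗ₜ[k] y) = HH.nmu (HH.S x) y := rfl

/-- the lifted "`S` on the right then multiply" map -/
noncomputable def L2 : H ⊗[k] H →ₗ[k] H := TensorProduct.lift (HH.nmu.compl₂ HH.S)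

@[simp] lemma L2_tmul (x y : H) : HH.L2 (x ⊗ₜ[k] y) = HH.nmu x (HH.S y) := rfl

lemma Ai2_mul_S (x y : H) :
    HH.nmu (HH.S (HH.Ai x)) (HH.Ai y)
      = HH.Ai (HH.Ai (HH.mul (HH.S x) y)) := by
  rw [HH.S_Ai]
  simp only [nmu_apply]
  rw [← HH.Ai_mul, ← HH.Ai_mul]

/-- normalized antipode axiom, left, map form -/
lemma ALm (h : H) : HH.L1 (HH.nD h) = HH.counit h • HH.one := by
  rw [nD_eq_map, HH.repr h, map_sum, map_sum]
  have : ∀ i, HH.L1 ((TensorProduct.map HH.Ai HH.Ai) (HH.d1 h i ⊗ₜ[k] HH.d2 h i))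
      = HH.Ai (HH.Ai (HH.mul (HH.S (HH.d1 h i)) (HH.d2 h i))) := by
    intro i
    rw [TensorProduct.map_tmul, L1_tmul, Ai2_mul_S]
  rw [Finset.sum_congr rfl (fun i _ => this i), ← map_sum, ← map_sum, HH.S_left]
  rw [map_smul, map_smul, HH.Ai_one, HH.Ai_one]

lemma mul_S_Ai2 (x y : H) :
    HH.nmu (HH.Ai x) (HH.S (HH.Ai y))
      = HH.Ai (HH.Ai (HH.mul x (HH.S y))) := by
  rw [HH.S_Ai]
  simp only [nmu_apply]
  rw [← HH.Ai_mul, ← HH.Ai_mul]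

/-- normalized antipode axiom, right, map form -/
lemma ARm (h : H) : HH.L2 (HH.nD h) = HH.counit h • HH.one := by
  rw [nD_eq_map, HH.repr h, map_sum, map_sum]
  have : ∀ i, HH.L2 ((TensorProduct.map HH.Ai HH.Ai) (HH.d1 h i ⊗ₜ[k] HH.d2 h i))
      = HH.Ai (HH.Ai (HH.mul (HH.d1 h i) (HH.S (HH.d2 h i)))) := by
    intro i
    rw [TensorProduct.map_tmul, L2_tmul, mul_S_Ai2]
  rw [Finset.sum_congr rfl (fun i _ => this i), ← map_sum, ← map_sum, HH.S_right]
  rw [map_smul, map_smul, HH.Ai_one, HH.Ai_one]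

/-- antipode axioms in decomposition form -/
lemma AL (h : H) : ∑ i ∈ HH.sa h, HH.nmu (HH.S (HH.aa h i)) (HH.bb h i)
    = HH.counit h • HH.one := by
  have := HH.ALm h
  rw [HH.Drepr h, map_sum] at this
  simpa using this

lemma AR (h : H) : ∑ i ∈ HH.sa h, HH.nmu (HH.aa h i) (HH.S (HH.bb h i))
    = HH.counit h • HH.one := by
  have := HH.ARm h
  rw [HH.Drepr h, map_sum] at this
  simpa using this

lemma S_one : HH.S HH.one = HH.one := by
  have := HH.ARm HH.one
  rw [HH.nD_one, HH.counit_one, one_smul, L2_tmul, one_nmu] at this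
  exact this

lemma counit_S (h : H) : HH.counit (HH.S h) = HH.counit h := by
  have h1 := congrArg HH.counit (HH.AL h)
  rw [map_sum, map_smul, HH.counit_one, smul_eq_mul, _root_.mul_one] at h1
  have h2 : ∀ i ∈ HH.sa h, HH.counit (HH.nmu (HH.S (HH.aa h i)) (HH.bb h i))
      = HH.counit (HH.bb h i) • HH.counit (HH.S (HH.aa h i)) := by
    intro i _
    rw [counit_nmu, smul_eq_mul, mul_comm]
  rw [Finset.sum_congr rfl h2] at h1
  calc HH.counit (HH.S h) = HH.counit (HH.S (∑ i ∈ HH.sa h, HH.counit (HH.bb h i) • HH.aa h i)) := by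
        rw [HH.CR h]
    _ = ∑ i ∈ HH.sa h, HH.counit (HH.bb h i) • HH.counit (HH.S (HH.aa h i)) := by
        rw [map_sum, map_sum]
        exact Finset.sum_congr rfl (fun i _ => by rw [map_smul, map_smul])
    _ = HH.counit h := h1


/-- original multiplication lifted -/
noncomputable def Mo : H ⊗[k] H →ₗ[k] H := TensorProduct.lift HH.mul

@[simp] lemma Mo_tmul (x y : H) : HH.Mo (x ⊗ₜ[k] y) = HH.mul x y := rfl

lemma comul_mul_map (x y : H) :
    HH.comul (HH.mul x y)
      = (TensorProduct.map HH.Mo HH.Mo)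
          ((TensorProduct.tensorTensorTensorComm k H H H H)
            (HH.comul x ⊗ₜ[k] HH.comul y)) := by
  rw [HH.comul_mul, HH.repr x, HH.repr y, TensorProduct.sum_tmul]
  rw [map_sum, map_sum]
  refine Finset.sum_congr rfl (fun i _ => ?_)
  rw [TensorProduct.tmul_sum, map_sum, map_sum]
  refine Finset.sum_congr rfl (fun j _ => ?_)
  simp

/-- the bialgebra law for the normalized structure -/
lemma nD_nmu (x y : H) : HH.nD (HH.nmu x y) = HH.P2 (HH.nD x) (HH.nD y) := by
  have lhs1 : HH.nD (HH.nmu x y)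
      = HH.comul (HH.mul (HH.Ai (HH.Ai x)) (HH.Ai (HH.Ai y))) := by
    simp only [nD_apply, nmu_apply, ← Ai_apply]
    rw [HH.Ai_mul]
  rw [lhs1, comul_mul_map]
  have cx : HH.comul (HH.Ai (HH.Ai x)) = ∑ i ∈ HH.sa x, HH.Ai (HH.aa x i) ⊗ₜ[k] HH.Ai (HH.bb x i) := by
    have : HH.comul (HH.α.symm (HH.α.symm x))
        = TensorProduct.map HH.Ai HH.Ai (HH.comul (HH.α.symm x)) := HH.comul_Ai _
    rw [Ai_apply, Ai_apply, this, HH.repr (HH.α.symm x), map_sum]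
    simp [sa, aa, bb]
  have cy : HH.comul (HH.Ai (HH.Ai y)) = ∑ j ∈ HH.sa y, HH.Ai (HH.aa y j) ⊗ₜ[k] HH.Ai (HH.bb y j) := by
    have : HH.comul (HH.α.symm (HH.α.symm y))
        = TensorProduct.map HH.Ai HH.Ai (HH.comul (HH.α.symm y)) := HH.comul_Ai _
    rw [Ai_apply, Ai_apply, this, HH.repr (HH.α.symm y), map_sum]
    simp [sa, aa, bb]
  rw [cx, cy, HH.Drepr x, HH.Drepr y, TensorProduct.sum_tmul, map_sum, map_sum]
  rw [P2_apply, TensorProduct.sum_tmul, map_sum]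
  refine Finset.sum_congr rfl (fun i _ => ?_)
  rw [TensorProduct.tmul_sum, map_sum, map_sum, TensorProduct.tmul_sum, map_sum]
  refine Finset.sum_congr rfl (fun j _ => ?_)
  simp

lemma assoc_naturality (t : (H ⊗[k] H) ⊗[k] H) :
    (TensorProduct.map HH.Ai (TensorProduct.map HH.Ai HH.Ai))
        ((TensorProduct.assoc k H H H) t)
      = (TensorProduct.assoc k H H H)
          ((TensorProduct.map (TensorProduct.map HH.Ai HH.Ai) HH.Ai) t) := by
  have : (TensorProduct.map HH.Ai (TensorProduct.map HH.Ai HH.Ai)).comp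
        (TensorProduct.assoc k H H H).toLinearMap
      = ((TensorProduct.assoc k H H H).toLinearMap).comp
          (TensorProduct.map (TensorProduct.map HH.Ai HH.Ai) HH.Ai) := by
    apply TensorProduct.ext_threefold
    intro a b c
    simp
  exact congrFun (congrArg (fun f => f.toFun) this) t

/-- coassociativity of the normalized coproduct, decomposition form -/
lemma COe (h : H) :
    ∑ i ∈ HH.sa h, (TensorProduct.assoc k H H H) (HH.nD (HH.aa h i) ⊗ₜ[k] HH.bb h i)
      = ∑ i ∈ HH.sa h, HH.aa h i ⊗ₜ[k] HH.nD (HH.bb h i) := by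
  simp only [sa, aa, bb, nD_apply]
  set g := HH.α.symm h with hg
  have hc := HH.hom_coassoc g
  have h2 := congrArg (TensorProduct.map HH.Ai (TensorProduct.map HH.Ai HH.Ai)) hc
  rw [map_sum, map_sum] at h2
  have e1 : ∀ i ∈ HH.T g,
      (TensorProduct.map HH.Ai (TensorProduct.map HH.Ai HH.Ai))
        (HH.α (HH.d1 g i) ⊗ₜ[k] HH.comul (HH.d2 g i))
      = HH.d1 g i ⊗ₜ[k] HH.comul (HH.α.symm (HH.d2 g i)) := by
    intro i _
    rw [TensorProduct.map_tmul]
    congr 1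
    · simp
    · rw [HH.comul_Ai]
  have e2 : ∀ i ∈ HH.T g,
      (TensorProduct.map HH.Ai (TensorProduct.map HH.Ai HH.Ai))
        ((TensorProduct.assoc k H H H) (HH.comul (HH.d1 g i) ⊗ₜ[k] HH.α (HH.d2 g i)))
      = (TensorProduct.assoc k H H H)
          (HH.comul (HH.α.symm (HH.d1 g i)) ⊗ₜ[k] HH.d2 g i) := by
    intro i _
    rw [assoc_naturality, TensorProduct.map_tmul]
    congr 2
    · rw [HH.comul_Ai]
    · simp
  rw [Finset.sum_congr rfl e2] at h2
  rw [map_sum] at h2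
  rw [Finset.sum_congr rfl e1] at h2
  exact h2

/-- `K1`: the `D∘S`-partner convolution identity -/
lemma K1 (z : H) :
    ∑ j ∈ HH.sa z, HH.P2 (HH.nD (HH.aa z j)) (HH.nD (HH.S (HH.bb z j)))
      = HH.counit z • (HH.one ⊗ₜ[k] HH.one) := by
  have : ∀ j ∈ HH.sa z, HH.P2 (HH.nD (HH.aa z j)) (HH.nD (HH.S (HH.bb z j)))
      = HH.nD (HH.nmu (HH.aa z j) (HH.S (HH.bb z j))) := by
    intro j _; rw [nD_nmu]
  rw [Finset.sum_congr rfl this, ← map_sum, HH.AR, map_smul, nD_one]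

lemma P2_one_right (w : H ⊗[k] H) : HH.P2 w (HH.one ⊗ₜ[k] HH.one) = w := by
  induction w using TensorProduct.induction_on with
  | zero => simp
  | tmul a b => rw [P2_tmul, nmu_one, nmu_one]
  | add u v hu hv => rw [P2_apply, TensorProduct.add_tmul, map_add] at *; rw [hu, hv]

lemma P2_one_left (w : H ⊗[k] H) : HH.P2 (HH.one ⊗ₜ[k] HH.one) w = w := by
  induction w using TensorProduct.induction_on with
  | zero => simp
  | tmul a b => rw [P2_tmul, one_nmu, one_nmu]
  | add u v hu hv => rw [map_add, hu, hv]

lemma P2_assoc (u v w : H ⊗[k] H) : HH.P2 (HH.P2 u v) w = HH.P2 u (HH.P2 v w) := by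
  induction u using TensorProduct.induction_on with
  | zero => simp
  | add u1 u2 h1 h2 =>
      simp only [map_add, LinearMap.add_apply, h1, h2]
  | tmul a b =>
      induction v using TensorProduct.induction_on with
      | zero => simp
      | add v1 v2 h1 h2 =>
          simp only [map_add, LinearMap.add_apply, h1, h2]
      | tmul c d =>
          induction w using TensorProduct.induction_on with
          | zero => simp
          | add w1 w2 h1 h2 => simp only [map_add, h1, h2]
          | tmul e f => rw [P2_tmul, P2_tmul, P2_tmul, P2_tmul, nmu_assoc, nmu_assoc]


/-- the "twisted S⊗S" map -/
noncomputable def Gp : H →ₗ[k] H ⊗[k] H :=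
  (TensorProduct.map HH.S HH.S) ∘ₗ (TensorProduct.comm k H H).toLinearMap ∘ₗ HH.nD

lemma Gp_repr (h : H) :
    HH.Gp h = ∑ i ∈ HH.sa h, HH.S (HH.bb h i) ⊗ₜ[k] HH.S (HH.aa h i) := by
  rw [Gp, LinearMap.comp_apply, LinearMap.comp_apply, HH.Drepr h]
  rw [LinearEquiv.coe_coe, map_sum, map_sum]
  simp

/-- four-legged gadget for `K2` -/
noncomputable def ph : H ⊗[k] (H ⊗[k] (H ⊗[k] H)) →ₗ[k] H ⊗[k] H :=
  (TensorProduct.map HH.L1 HH.L1) ∘ₗ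
  (TensorProduct.tensorTensorTensorComm k H H H H).toLinearMap ∘ₗ
  (LinearMap.rTensor (H ⊗[k] H) (TensorProduct.comm k H H).toLinearMap) ∘ₗ
  (TensorProduct.assoc k H H (H ⊗[k] H)).symm.toLinearMap

@[simp] lemma ph_tmul (u v w t : H) :
    HH.ph (u ⊗ₜ[k] (v ⊗ₜ[k] (w ⊗ₜ[k] t)))
      = HH.nmu (HH.S v) w ⊗ₜ[k] HH.nmu (HH.S u) t := by
  simp [ph, TensorProduct.assoc_symm_tmul]


lemma K2 (z : H) :
    ∑ j ∈ HH.sa z, HH.P2 (HH.Gp (HH.aa z j)) (HH.nD (HH.bb z j))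
      = HH.counit z • (HH.one ⊗ₜ[k] HH.one) := by
  classical
  -- Step A: identify with `ph` applied to a triple-sum tensor
  have stepA : ∀ j ∈ HH.sa z,
      HH.P2 (HH.Gp (HH.aa z j)) (HH.nD (HH.bb z j))
        = HH.ph (∑ p ∈ HH.sa (HH.aa z j),
            HH.aa (HH.aa z j) p ⊗ₜ[k] (HH.bb (HH.aa z j) p ⊗ₜ[k] HH.nD (HH.bb z j))) := by
    intro j _
    have lhs : HH.P2 (HH.Gp (HH.aa z j)) (HH.nD (HH.bb z j))
        = ∑ q ∈ HH.sa (HH.bb z j), ∑ p ∈ HH.sa (HH.aa z j),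
            HH.nmu (HH.S (HH.bb (HH.aa z j) p)) (HH.aa (HH.bb z j) q)
              ⊗ₜ[k] HH.nmu (HH.S (HH.aa (HH.aa z j) p)) (HH.bb (HH.bb z j) q) := by
      rw [HH.Drepr (HH.bb z j), map_sum]
      refine Finset.sum_congr rfl (fun q _ => ?_)
      rw [Gp_repr, map_sum, LinearMap.sum_apply]
      exact Finset.sum_congr rfl (fun p _ => by rw [P2_tmul])
    have rhs : HH.ph (∑ p ∈ HH.sa (HH.aa z j),
          HH.aa (HH.aa z j) p ⊗ₜ[k] (HH.bb (HH.aa z j) p ⊗ₜ[k] HH.nD (HH.bb z j)))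
        = ∑ p ∈ HH.sa (HH.aa z j), ∑ q ∈ HH.sa (HH.bb z j),
            HH.nmu (HH.S (HH.bb (HH.aa z j) p)) (HH.aa (HH.bb z j) q)
              ⊗ₜ[k] HH.nmu (HH.S (HH.aa (HH.aa z j) p)) (HH.bb (HH.bb z j) q) := by
      rw [map_sum]
      refine Finset.sum_congr rfl (fun p _ => ?_)
      rw [HH.Drepr (HH.bb z j), TensorProduct.tmul_sum, TensorProduct.tmul_sum, map_sum]
      exact Finset.sum_congr rfl (fun q _ => by rw [ph_tmul])
    rw [lhs, rhs, Finset.sum_comm]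
  -- Step B: rewrite the triple-sum via coassociativity (first application)
  have stepB :
      ∑ j ∈ HH.sa z, ∑ p ∈ HH.sa (HH.aa z j),
          HH.aa (HH.aa z j) p ⊗ₜ[k] (HH.bb (HH.aa z j) p ⊗ₜ[k] HH.nD (HH.bb z j))
        = ∑ j ∈ HH.sa z, ∑ q ∈ HH.sa (HH.bb z j),
            HH.aa z j ⊗ₜ[k] (HH.aa (HH.bb z j) q ⊗ₜ[k] HH.nD (HH.bb (HH.bb z j) q)) := by
    have e1 : ∀ j ∈ HH.sa z,
        (LinearMap.lTensor H (LinearMap.lTensor H HH.nD))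
            ((TensorProduct.assoc k H H H) (HH.nD (HH.aa z j) ⊗ₜ[k] HH.bb z j))
          = ∑ p ∈ HH.sa (HH.aa z j),
              HH.aa (HH.aa z j) p ⊗ₜ[k] (HH.bb (HH.aa z j) p ⊗ₜ[k] HH.nD (HH.bb z j)) := by
      intro j _
      rw [HH.Drepr (HH.aa z j), TensorProduct.sum_tmul, map_sum, map_sum]
      refine Finset.sum_congr rfl (fun p _ => ?_)
      rw [TensorProduct.assoc_tmul, LinearMap.lTensor_tmul, LinearMap.lTensor_tmul]
    have e2 : ∀ j ∈ HH.sa z,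
        (LinearMap.lTensor H (LinearMap.lTensor H HH.nD))
            (HH.aa z j ⊗ₜ[k] HH.nD (HH.bb z j))
          = ∑ q ∈ HH.sa (HH.bb z j),
              HH.aa z j ⊗ₜ[k] (HH.aa (HH.bb z j) q ⊗ₜ[k] HH.nD (HH.bb (HH.bb z j) q)) := by
      intro j _
      rw [HH.Drepr (HH.bb z j), TensorProduct.tmul_sum, map_sum]
      refine Finset.sum_congr rfl (fun q _ => ?_)
      rw [LinearMap.lTensor_tmul, LinearMap.lTensor_tmul]
    have key := congrArg (LinearMap.lTensor H (LinearMap.lTensor H HH.nD)) (HH.COe z)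
    rw [map_sum, map_sum] at key
    rw [Finset.sum_congr rfl e1, Finset.sum_congr rfl e2] at key
    exact key
  -- Step C: second application of coassociativity, inside each `j` term
  have stepC : ∀ j ∈ HH.sa z,
      ∑ q ∈ HH.sa (HH.bb z j),
          HH.aa z j ⊗ₜ[k] (HH.aa (HH.bb z j) q ⊗ₜ[k] HH.nD (HH.bb (HH.bb z j) q))
        = ∑ q ∈ HH.sa (HH.bb z j), ∑ r ∈ HH.sa (HH.aa (HH.bb z j) q),
            HH.aa z j ⊗ₜ[k] (HH.aa (HH.aa (HH.bb z j) q) r ⊗ₜ[k]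
              (HH.bb (HH.aa (HH.bb z j) q) r ⊗ₜ[k] HH.bb (HH.bb z j) q)) := by
    intro j _
    have h1 : ∑ q ∈ HH.sa (HH.bb z j),
        HH.aa (HH.bb z j) q ⊗ₜ[k] HH.nD (HH.bb (HH.bb z j) q)
        = ∑ q ∈ HH.sa (HH.bb z j), ∑ r ∈ HH.sa (HH.aa (HH.bb z j) q),
            HH.aa (HH.aa (HH.bb z j) q) r ⊗ₜ[k]
              (HH.bb (HH.aa (HH.bb z j) q) r ⊗ₜ[k] HH.bb (HH.bb z j) q) := by
      rw [← HH.COe (HH.bb z j)]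
      refine Finset.sum_congr rfl (fun q _ => ?_)
      rw [HH.Drepr (HH.aa (HH.bb z j) q), TensorProduct.sum_tmul, map_sum]
      refine Finset.sum_congr rfl (fun r _ => ?_)
      rw [TensorProduct.assoc_tmul]
    calc ∑ q ∈ HH.sa (HH.bb z j),
          HH.aa z j ⊗ₜ[k] (HH.aa (HH.bb z j) q ⊗ₜ[k] HH.nD (HH.bb (HH.bb z j) q))
        = HH.aa z j ⊗ₜ[k] ∑ q ∈ HH.sa (HH.bb z j),
            (HH.aa (HH.bb z j) q ⊗ₜ[k] HH.nD (HH.bb (HH.bb z j) q)) := by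
          rw [TensorProduct.tmul_sum]
      _ = HH.aa z j ⊗ₜ[k] ∑ q ∈ HH.sa (HH.bb z j), ∑ r ∈ HH.sa (HH.aa (HH.bb z j) q),
            (HH.aa (HH.aa (HH.bb z j) q) r ⊗ₜ[k]
              (HH.bb (HH.aa (HH.bb z j) q) r ⊗ₜ[k] HH.bb (HH.bb z j) q)) := by rw [h1]
      _ = _ := by
            rw [TensorProduct.tmul_sum]
            exact Finset.sum_congr rfl (fun q _ => by rw [TensorProduct.tmul_sum])
  -- Step D: apply `ph` and collapse with the antipode and counit axioms
  calc ∑ j ∈ HH.sa z, HH.P2 (HH.Gp (HH.aa z j)) (HH.nD (HH.bb z j))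
      = ∑ j ∈ HH.sa z, HH.ph (∑ p ∈ HH.sa (HH.aa z j),
          HH.aa (HH.aa z j) p ⊗ₜ[k] (HH.bb (HH.aa z j) p ⊗ₜ[k] HH.nD (HH.bb z j))) :=
        Finset.sum_congr rfl stepA
    _ = HH.ph (∑ j ∈ HH.sa z, ∑ p ∈ HH.sa (HH.aa z j),
          HH.aa (HH.aa z j) p ⊗ₜ[k] (HH.bb (HH.aa z j) p ⊗ₜ[k] HH.nD (HH.bb z j))) := by
        rw [map_sum]
    _ = HH.ph (∑ j ∈ HH.sa z, ∑ q ∈ HH.sa (HH.bb z j), ∑ r ∈ HH.sa (HH.aa (HH.bb z j) q),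
          HH.aa z j ⊗ₜ[k] (HH.aa (HH.aa (HH.bb z j) q) r ⊗ₜ[k]
            (HH.bb (HH.aa (HH.bb z j) q) r ⊗ₜ[k] HH.bb (HH.bb z j) q))) := by
        rw [stepB, Finset.sum_congr rfl stepC]
    _ = ∑ j ∈ HH.sa z, ∑ q ∈ HH.sa (HH.bb z j),
          (∑ r ∈ HH.sa (HH.aa (HH.bb z j) q),
            HH.nmu (HH.S (HH.aa (HH.aa (HH.bb z j) q) r)) (HH.bb (HH.aa (HH.bb z j) q) r))
          ⊗ₜ[k] HH.nmu (HH.S (HH.aa z j)) (HH.bb (HH.bb z j) q) := by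
        rw [map_sum]
        refine Finset.sum_congr rfl (fun j _ => ?_)
        rw [map_sum]
        refine Finset.sum_congr rfl (fun q _ => ?_)
        rw [map_sum, TensorProduct.sum_tmul]
        exact Finset.sum_congr rfl (fun r _ => by rw [ph_tmul])
    _ = ∑ j ∈ HH.sa z, ∑ q ∈ HH.sa (HH.bb z j),
          (HH.counit (HH.aa (HH.bb z j) q) • HH.one)
          ⊗ₜ[k] HH.nmu (HH.S (HH.aa z j)) (HH.bb (HH.bb z j) q) := by
        refine Finset.sum_congr rfl (fun j _ => Finset.sum_congr rfl (fun q _ => ?_))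
        rw [HH.AL (HH.aa (HH.bb z j) q)]
    _ = ∑ j ∈ HH.sa z, HH.one ⊗ₜ[k] HH.nmu (HH.S (HH.aa z j)) (HH.bb z j) := by
        refine Finset.sum_congr rfl (fun j _ => ?_)
        have : ∀ q ∈ HH.sa (HH.bb z j),
            (HH.counit (HH.aa (HH.bb z j) q) • HH.one)
              ⊗ₜ[k] HH.nmu (HH.S (HH.aa z j)) (HH.bb (HH.bb z j) q)
            = HH.one ⊗ₜ[k] HH.nmu (HH.S (HH.aa z j))
                (HH.counit (HH.aa (HH.bb z j) q) • HH.bb (HH.bb z j) q) := by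
          intro q _
          rw [TensorProduct.smul_tmul, map_smul]
        rw [Finset.sum_congr rfl this, ← TensorProduct.tmul_sum, ← map_sum, HH.CL (HH.bb z j)]
    _ = HH.one ⊗ₜ[k] (HH.counit z • HH.one) := by
        rw [← TensorProduct.tmul_sum, HH.AL z]
    _ = HH.counit z • (HH.one ⊗ₜ[k] HH.one) := by
        rw [TensorProduct.tmul_smul]


/-- trilinear gadget for the anti-comultiplicativity proof -/
noncomputable def Th3 : H ⊗[k] (H ⊗[k] H) →ₗ[k] H ⊗[k] H :=
  HH.nmm ∘ₗ (LinearMap.rTensor (H ⊗[k] H) HH.nmm) ∘ₗ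
  (TensorProduct.assoc k (H ⊗[k] H) (H ⊗[k] H) (H ⊗[k] H)).symm.toLinearMap ∘ₗ
  (TensorProduct.map HH.Gp (TensorProduct.map HH.nD (HH.nD ∘ₗ HH.S)))

@[simp] lemma Th3_tmul (u v w : H) :
    HH.Th3 (u ⊗ₜ[k] (v ⊗ₜ[k] w))
      = HH.P2 (HH.P2 (HH.Gp u) (HH.nD v)) (HH.nD (HH.S w)) := by
  simp [Th3, TensorProduct.assoc_symm_tmul]

/-- anti-comultiplicativity of the antipode (normalized form) -/
lemma nD_S (h : H) : HH.nD (HH.S h) = HH.Gp h := by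
  classical
  have c1 : HH.Gp h = ∑ i ∈ HH.sa h, HH.counit (HH.bb h i) • HH.Gp (HH.aa h i) := by
    conv_lhs => rw [← HH.CR h]
    rw [map_sum]
    exact Finset.sum_congr rfl (fun i _ => by rw [map_smul])
  have c2 : ∀ i ∈ HH.sa h, HH.counit (HH.bb h i) • HH.Gp (HH.aa h i)
      = ∑ j ∈ HH.sa (HH.bb h i),
          HH.P2 (HH.P2 (HH.Gp (HH.aa h i)) (HH.nD (HH.aa (HH.bb h i) j)))
            (HH.nD (HH.S (HH.bb (HH.bb h i) j))) := by
    intro i _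
    have : HH.counit (HH.bb h i) • HH.Gp (HH.aa h i)
        = HH.P2 (HH.Gp (HH.aa h i)) (HH.counit (HH.bb h i) • (HH.one ⊗ₜ[k] HH.one)) := by
      rw [map_smul, HH.P2_one_right]
    rw [this, ← HH.K1 (HH.bb h i), map_sum]
    exact Finset.sum_congr rfl (fun j _ => by rw [HH.P2_assoc])
  have c4 : HH.Gp h = ∑ i ∈ HH.sa h, HH.Th3 (HH.aa h i ⊗ₜ[k] HH.nD (HH.bb h i)) := by
    rw [c1, Finset.sum_congr rfl c2]
    refine Finset.sum_congr rfl (fun i _ => ?_)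
    rw [HH.Drepr (HH.bb h i), TensorProduct.tmul_sum, map_sum]
    exact Finset.sum_congr rfl (fun j _ => by rw [Th3_tmul])
  have c5 : ∑ i ∈ HH.sa h, HH.Th3 (HH.aa h i ⊗ₜ[k] HH.nD (HH.bb h i))
      = ∑ i ∈ HH.sa h, HH.P2 (HH.counit (HH.aa h i) • (HH.one ⊗ₜ[k] HH.one))
          (HH.nD (HH.S (HH.bb h i))) := by
    have key := congrArg HH.Th3 (HH.COe h)
    rw [map_sum, map_sum] at key
    have e1 : ∀ i ∈ HH.sa h,
        HH.Th3 ((TensorProduct.assoc k H H H) (HH.nD (HH.aa h i) ⊗ₜ[k] HH.bb h i))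
          = HH.P2 (∑ j ∈ HH.sa (HH.aa h i),
              HH.P2 (HH.Gp (HH.aa (HH.aa h i) j)) (HH.nD (HH.bb (HH.aa h i) j)))
              (HH.nD (HH.S (HH.bb h i))) := by
      intro i _
      rw [HH.Drepr (HH.aa h i), TensorProduct.sum_tmul, map_sum, map_sum]
      have : ∀ j ∈ HH.sa (HH.aa h i),
          HH.Th3 ((TensorProduct.assoc k H H H)
            ((HH.aa (HH.aa h i) j ⊗ₜ[k] HH.bb (HH.aa h i) j) ⊗ₜ[k] HH.bb h i))
          = HH.P2 (HH.P2 (HH.Gp (HH.aa (HH.aa h i) j)) (HH.nD (HH.bb (HH.aa h i) j)))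
              (HH.nD (HH.S (HH.bb h i))) := by
        intro j _
        rw [TensorProduct.assoc_tmul, Th3_tmul]
      rw [Finset.sum_congr rfl this]
      rw [← LinearMap.sum_apply, ← map_sum]
    rw [← key, Finset.sum_congr rfl e1]
    refine Finset.sum_congr rfl (fun i _ => ?_)
    rw [HH.K2 (HH.aa h i)]
  have c6 : ∑ i ∈ HH.sa h, HH.P2 (HH.counit (HH.aa h i) • (HH.one ⊗ₜ[k] HH.one))
        (HH.nD (HH.S (HH.bb h i)))
      = HH.nD (HH.S h) := by
    have : ∀ i ∈ HH.sa h, HH.P2 (HH.counit (HH.aa h i) • (HH.one ⊗ₜ[k] HH.one))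
          (HH.nD (HH.S (HH.bb h i)))
        = HH.nD (HH.S (HH.counit (HH.aa h i) • HH.bb h i)) := by
      intro i _
      rw [map_smul, LinearMap.smul_apply, HH.P2_one_left, map_smul, map_smul]
    rw [Finset.sum_congr rfl this, ← map_sum, ← map_sum, HH.CL h]
  rw [c4, c5, c6]


variable {HH}

lemma nmu_sum_left {ι : Type*} (t : Finset ι) (f : ι → H) (z : H) :
    HH.nmu (∑ i ∈ t, f i) z = ∑ i ∈ t, HH.nmu (f i) z := by
  rw [map_sum, LinearMap.sum_apply]

lemma nmu_sum_right {ι : Type*} (t : Finset ι) (f : ι → H) (z : H) :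
    HH.nmu z (∑ i ∈ t, f i) = ∑ i ∈ t, HH.nmu z (f i) := map_sum _ _ _

lemma nmu_smul_left (c : k) (w z : H) : HH.nmu (c • w) z = c • HH.nmu w z := by
  rw [map_smul, LinearMap.smul_apply]

lemma nmu_smul_right (c : k) (w z : H) : HH.nmu z (c • w) = c • HH.nmu z w :=
  map_smul _ _ _

variable (HH)

/-- the 6-linear gadget for the anti-multiplicativity proof -/
noncomputable def Th : (H ⊗[k] (H ⊗[k] H)) ⊗[k] (H ⊗[k] (H ⊗[k] H)) →ₗ[k] H :=
  (HH.nM ∘ₗ (LinearMap.rTensor H HH.nM) ∘ₗ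
    (TensorProduct.assoc k H H H).symm.toLinearMap) ∘ₗ
  (TensorProduct.map
    (TensorProduct.lift (((HH.nmu.comp HH.S).flip).comp HH.S))
    ((TensorProduct.map HH.nM (HH.S ∘ₗ HH.nM)) ∘ₗ
      (TensorProduct.tensorTensorTensorComm k H H H H).toLinearMap)) ∘ₗ
  (TensorProduct.tensorTensorTensorComm k H (H ⊗[k] H) H (H ⊗[k] H)).toLinearMap

@[simp] lemma Th_tmul (x1 x2 x3 y1 y2 y3 : H) :
    HH.Th ((x1 ⊗ₜ[k] (x2 ⊗ₜ[k] x3)) ⊗ₜ[k] (y1 ⊗ₜ[k] (y2 ⊗ₜ[k] y3)))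
      = HH.nmu (HH.nmu (HH.nmu (HH.S y1) (HH.S x1)) (HH.nmu x2 y2))
          (HH.S (HH.nmu x3 y3)) := by
  simp [Th, TensorProduct.assoc_symm_tmul]

/-- anti-multiplicativity of the antipode (normalized form) -/
lemma S_nmu (x y : H) : HH.S (HH.nmu x y) = HH.nmu (HH.S y) (HH.S x) := by
  classical
  -- E1: insert counits via CR
  have step1 : HH.nmu (HH.S y) (HH.S x)
      = ∑ i ∈ HH.sa x, ∑ j ∈ HH.sa y,
          (HH.counit (HH.bb x i) * HH.counit (HH.bb y j)) •
            HH.nmu (HH.S (HH.aa y j)) (HH.S (HH.aa x i)) := by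
    conv_lhs => rw [← HH.CR x, ← HH.CR y]
    have hx : HH.S (∑ i ∈ HH.sa x, HH.counit (HH.bb x i) • HH.aa x i)
        = ∑ i ∈ HH.sa x, HH.counit (HH.bb x i) • HH.S (HH.aa x i) := by
      rw [map_sum]; exact Finset.sum_congr rfl (fun i _ => map_smul _ _ _)
    have hy : HH.S (∑ j ∈ HH.sa y, HH.counit (HH.bb y j) • HH.aa y j)
        = ∑ j ∈ HH.sa y, HH.counit (HH.bb y j) • HH.S (HH.aa y j) := by
      rw [map_sum]; exact Finset.sum_congr rfl (fun j _ => map_smul _ _ _)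
    rw [hx, hy, nmu_sum_left]
    have hin : ∀ j ∈ HH.sa y,
        HH.nmu (HH.counit (HH.bb y j) • HH.S (HH.aa y j))
            (∑ i ∈ HH.sa x, HH.counit (HH.bb x i) • HH.S (HH.aa x i))
          = ∑ i ∈ HH.sa x, (HH.counit (HH.bb x i) * HH.counit (HH.bb y j)) •
              HH.nmu (HH.S (HH.aa y j)) (HH.S (HH.aa x i)) := by
      intro j _
      rw [nmu_smul_left, nmu_sum_right, Finset.smul_sum]
      exact Finset.sum_congr rfl (fun i _ => by
        rw [nmu_smul_right, smul_smul, mul_comm])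
    rw [Finset.sum_congr rfl hin, Finset.sum_comm]
  -- E2: insert the right antipode identity for `nmu (bb x i) (bb y j)`
  have step2 : ∀ i ∈ HH.sa x, ∀ j ∈ HH.sa y,
      (HH.counit (HH.bb x i) * HH.counit (HH.bb y j)) •
          HH.nmu (HH.S (HH.aa y j)) (HH.S (HH.aa x i))
        = ∑ p ∈ HH.sa (HH.bb x i), ∑ q ∈ HH.sa (HH.bb y j),
            HH.nmu (HH.nmu (HH.S (HH.aa y j)) (HH.S (HH.aa x i)))
              (HH.nmu (HH.nmu (HH.aa (HH.bb x i) p) (HH.aa (HH.bb y j) q))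
                (HH.S (HH.nmu (HH.bb (HH.bb x i) p) (HH.bb (HH.bb y j) q)))) := by
    intro i _ j _
    have e0 : (HH.counit (HH.bb x i) * HH.counit (HH.bb y j)) • HH.one
        = ∑ p ∈ HH.sa (HH.bb x i), ∑ q ∈ HH.sa (HH.bb y j),
            HH.nmu (HH.nmu (HH.aa (HH.bb x i) p) (HH.aa (HH.bb y j) q))
              (HH.S (HH.nmu (HH.bb (HH.bb x i) p) (HH.bb (HH.bb y j) q))) := by
      have h1 : (HH.counit (HH.bb x i) * HH.counit (HH.bb y j)) • HH.one
          = HH.L2 (HH.nD (HH.nmu (HH.bb x i) (HH.bb y j))) := by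
        rw [HH.ARm, counit_nmu]
      rw [h1, HH.nD_nmu, HH.Drepr (HH.bb x i), HH.Drepr (HH.bb y j), map_sum, map_sum]
      have hq : ∀ q ∈ HH.sa (HH.bb y j),
          HH.L2 (HH.P2 (∑ p ∈ HH.sa (HH.bb x i),
              HH.aa (HH.bb x i) p ⊗ₜ[k] HH.bb (HH.bb x i) p)
            (HH.aa (HH.bb y j) q ⊗ₜ[k] HH.bb (HH.bb y j) q))
          = ∑ p ∈ HH.sa (HH.bb x i),
              HH.nmu (HH.nmu (HH.aa (HH.bb x i) p) (HH.aa (HH.bb y j) q))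
                (HH.S (HH.nmu (HH.bb (HH.bb x i) p) (HH.bb (HH.bb y j) q))) := by
        intro q _
        rw [map_sum, LinearMap.sum_apply, map_sum]
        refine Finset.sum_congr rfl (fun p _ => ?_)
        rw [P2_tmul, L2_tmul]
      rw [Finset.sum_congr rfl hq, Finset.sum_comm]
    have e1 : (HH.counit (HH.bb x i) * HH.counit (HH.bb y j)) •
          HH.nmu (HH.S (HH.aa y j)) (HH.S (HH.aa x i))
        = HH.nmu (HH.nmu (HH.S (HH.aa y j)) (HH.S (HH.aa x i)))
            ((HH.counit (HH.bb x i) * HH.counit (HH.bb y j)) • HH.one) := by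
      rw [nmu_smul_right, nmu_one]
    rw [e1, e0, nmu_sum_right]
    exact Finset.sum_congr rfl (fun p _ => by rw [nmu_sum_right])
  -- E3: recognize the quadruple sum as `Th` applied to `Ux ⊗ Uy`
  have step3 : HH.nmu (HH.S y) (HH.S x)
      = HH.Th ((∑ i ∈ HH.sa x, HH.aa x i ⊗ₜ[k] HH.nD (HH.bb x i)) ⊗ₜ[k]
               (∑ j ∈ HH.sa y, HH.aa y j ⊗ₜ[k] HH.nD (HH.bb y j))) := by
    rw [step1, Finset.sum_congr rfl (fun i hi => Finset.sum_congr rfl (step2 i hi))]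
    rw [TensorProduct.sum_tmul, map_sum]
    refine Finset.sum_congr rfl (fun i _ => ?_)
    rw [TensorProduct.tmul_sum, map_sum]
    refine Finset.sum_congr rfl (fun j _ => ?_)
    rw [HH.Drepr (HH.bb x i), TensorProduct.tmul_sum, TensorProduct.sum_tmul, map_sum]
    refine Finset.sum_congr rfl (fun p _ => ?_)
    rw [HH.Drepr (HH.bb y j), TensorProduct.tmul_sum, TensorProduct.tmul_sum, map_sum]
    refine Finset.sum_congr rfl (fun q _ => ?_)
    rw [Th_tmul, HH.nmu_assoc (HH.nmu (HH.S (HH.aa y j)) (HH.S (HH.aa x i)))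
      (HH.nmu (HH.aa (HH.bb x i) p) (HH.aa (HH.bb y j) q))
      (HH.S (HH.nmu (HH.bb (HH.bb x i) p) (HH.bb (HH.bb y j) q)))]
  -- E4: rewrite via coassociativity on both sides
  have hUx : (∑ i ∈ HH.sa x, HH.aa x i ⊗ₜ[k] HH.nD (HH.bb x i))
      = ∑ i ∈ HH.sa x, (TensorProduct.assoc k H H H) (HH.nD (HH.aa x i) ⊗ₜ[k] HH.bb x i) :=
    (HH.COe x).symm
  have hUy : (∑ j ∈ HH.sa y, HH.aa y j ⊗ₜ[k] HH.nD (HH.bb y j))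
      = ∑ j ∈ HH.sa y, (TensorProduct.assoc k H H H) (HH.nD (HH.aa y j) ⊗ₜ[k] HH.bb y j) :=
    (HH.COe y).symm
  -- E5: expand the other grouping
  have step5 : HH.Th ((∑ i ∈ HH.sa x, (TensorProduct.assoc k H H H)
          (HH.nD (HH.aa x i) ⊗ₜ[k] HH.bb x i)) ⊗ₜ[k]
        (∑ j ∈ HH.sa y, (TensorProduct.assoc k H H H)
          (HH.nD (HH.aa y j) ⊗ₜ[k] HH.bb y j)))
      = ∑ i ∈ HH.sa x, ∑ p ∈ HH.sa (HH.aa x i), ∑ j ∈ HH.sa y, ∑ q ∈ HH.sa (HH.aa y j),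
          HH.nmu (HH.nmu (HH.nmu (HH.S (HH.aa (HH.aa y j) q)) (HH.S (HH.aa (HH.aa x i) p)))
              (HH.nmu (HH.bb (HH.aa x i) p) (HH.bb (HH.aa y j) q)))
            (HH.S (HH.nmu (HH.bb x i) (HH.bb y j))) := by
    have ex : ∀ i ∈ HH.sa x, (TensorProduct.assoc k H H H)
          (HH.nD (HH.aa x i) ⊗ₜ[k] HH.bb x i)
        = ∑ p ∈ HH.sa (HH.aa x i),
            HH.aa (HH.aa x i) p ⊗ₜ[k] (HH.bb (HH.aa x i) p ⊗ₜ[k] HH.bb x i) := by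
      intro i _
      rw [HH.Drepr (HH.aa x i), TensorProduct.sum_tmul, map_sum]
      exact Finset.sum_congr rfl (fun p _ => by rw [TensorProduct.assoc_tmul])
    have ey : ∀ j ∈ HH.sa y, (TensorProduct.assoc k H H H)
          (HH.nD (HH.aa y j) ⊗ₜ[k] HH.bb y j)
        = ∑ q ∈ HH.sa (HH.aa y j),
            HH.aa (HH.aa y j) q ⊗ₜ[k] (HH.bb (HH.aa y j) q ⊗ₜ[k] HH.bb y j) := by
      intro j _
      rw [HH.Drepr (HH.aa y j), TensorProduct.sum_tmul, map_sum]
      exact Finset.sum_congr rfl (fun q _ => by rw [TensorProduct.assoc_tmul])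
    rw [Finset.sum_congr rfl ex, Finset.sum_congr rfl ey]
    rw [TensorProduct.sum_tmul, map_sum]
    refine Finset.sum_congr rfl (fun i _ => ?_)
    rw [TensorProduct.sum_tmul, map_sum]
    refine Finset.sum_congr rfl (fun p _ => ?_)
    rw [TensorProduct.tmul_sum, map_sum]
    refine Finset.sum_congr rfl (fun j _ => ?_)
    rw [TensorProduct.tmul_sum, map_sum]
    refine Finset.sum_congr rfl (fun q _ => ?_)
    rw [Th_tmul]
  -- E6: reorder the sums
  have reorder : ∑ i ∈ HH.sa x, ∑ p ∈ HH.sa (HH.aa x i), ∑ j ∈ HH.sa y,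
        ∑ q ∈ HH.sa (HH.aa y j),
          HH.nmu (HH.nmu (HH.nmu (HH.S (HH.aa (HH.aa y j) q)) (HH.S (HH.aa (HH.aa x i) p)))
              (HH.nmu (HH.bb (HH.aa x i) p) (HH.bb (HH.aa y j) q)))
            (HH.S (HH.nmu (HH.bb x i) (HH.bb y j)))
      = ∑ i ∈ HH.sa x, ∑ j ∈ HH.sa y, ∑ q ∈ HH.sa (HH.aa y j),
          ∑ p ∈ HH.sa (HH.aa x i),
          HH.nmu (HH.nmu (HH.nmu (HH.S (HH.aa (HH.aa y j) q)) (HH.S (HH.aa (HH.aa x i) p)))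
              (HH.nmu (HH.bb (HH.aa x i) p) (HH.bb (HH.aa y j) q)))
            (HH.S (HH.nmu (HH.bb x i) (HH.bb y j))) := by
    refine Finset.sum_congr rfl (fun i _ => ?_)
    rw [Finset.sum_comm]
    refine Finset.sum_congr rfl (fun j _ => ?_)
    rw [Finset.sum_comm]
  -- E7: collapse the `p`-sum
  have col : ∀ i ∈ HH.sa x, ∀ j ∈ HH.sa y, ∀ q ∈ HH.sa (HH.aa y j),
      ∑ p ∈ HH.sa (HH.aa x i),
          HH.nmu (HH.nmu (HH.nmu (HH.S (HH.aa (HH.aa y j) q)) (HH.S (HH.aa (HH.aa x i) p)))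
              (HH.nmu (HH.bb (HH.aa x i) p) (HH.bb (HH.aa y j) q)))
            (HH.S (HH.nmu (HH.bb x i) (HH.bb y j)))
        = HH.counit (HH.aa x i) •
            HH.nmu (HH.nmu (HH.S (HH.aa (HH.aa y j) q)) (HH.bb (HH.aa y j) q))
              (HH.S (HH.nmu (HH.bb x i) (HH.bb y j))) := by
    intro i _ j _ q _
    have t1 : ∀ p ∈ HH.sa (HH.aa x i),
        HH.nmu (HH.nmu (HH.nmu (HH.S (HH.aa (HH.aa y j) q)) (HH.S (HH.aa (HH.aa x i) p)))
            (HH.nmu (HH.bb (HH.aa x i) p) (HH.bb (HH.aa y j) q)))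
          (HH.S (HH.nmu (HH.bb x i) (HH.bb y j)))
        = HH.nmu (HH.nmu (HH.S (HH.aa (HH.aa y j) q))
            (HH.nmu (HH.nmu (HH.S (HH.aa (HH.aa x i) p)) (HH.bb (HH.aa x i) p))
              (HH.bb (HH.aa y j) q)))
          (HH.S (HH.nmu (HH.bb x i) (HH.bb y j))) := by
      intro p _
      rw [HH.nmu_assoc (HH.S (HH.aa (HH.aa y j) q)) (HH.S (HH.aa (HH.aa x i) p))
          (HH.nmu (HH.bb (HH.aa x i) p) (HH.bb (HH.aa y j) q)),
        ← HH.nmu_assoc (HH.S (HH.aa (HH.aa x i) p)) (HH.bb (HH.aa x i) p)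
          (HH.bb (HH.aa y j) q)]
    rw [Finset.sum_congr rfl t1, ← nmu_sum_left]
    rw [← nmu_sum_right, ← nmu_sum_left, HH.AL (HH.aa x i)]
    rw [nmu_smul_left, one_nmu, nmu_smul_right, nmu_smul_left]
  -- E8: collapse the `q`-sum
  have col2 : ∀ i ∈ HH.sa x, ∀ j ∈ HH.sa y,
      ∑ q ∈ HH.sa (HH.aa y j),
          HH.counit (HH.aa x i) •
            HH.nmu (HH.nmu (HH.S (HH.aa (HH.aa y j) q)) (HH.bb (HH.aa y j) q))
              (HH.S (HH.nmu (HH.bb x i) (HH.bb y j)))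
        = (HH.counit (HH.aa x i) * HH.counit (HH.aa y j)) •
            HH.S (HH.nmu (HH.bb x i) (HH.bb y j)) := by
    intro i _ j _
    rw [← Finset.smul_sum, ← nmu_sum_left, HH.AL (HH.aa y j)]
    rw [nmu_smul_left, one_nmu, smul_smul]
  -- E9: final contraction via CL
  have step7 : ∑ i ∈ HH.sa x, ∑ j ∈ HH.sa y,
        (HH.counit (HH.aa x i) * HH.counit (HH.aa y j)) •
          HH.S (HH.nmu (HH.bb x i) (HH.bb y j))
      = HH.S (HH.nmu x y) := by
    conv_rhs => rw [← HH.CL x, ← HH.CL y]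
    have hmm : HH.nmu (∑ i ∈ HH.sa x, HH.counit (HH.aa x i) • HH.bb x i)
          (∑ j ∈ HH.sa y, HH.counit (HH.aa y j) • HH.bb y j)
        = ∑ i ∈ HH.sa x, ∑ j ∈ HH.sa y,
            (HH.counit (HH.aa x i) * HH.counit (HH.aa y j)) •
              HH.nmu (HH.bb x i) (HH.bb y j) := by
      rw [nmu_sum_left]
      refine Finset.sum_congr rfl (fun i _ => ?_)
      rw [nmu_smul_left, nmu_sum_right, Finset.smul_sum]
      refine Finset.sum_congr rfl (fun j _ => ?_)
      rw [nmu_smul_right, smul_smul]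
    rw [hmm, map_sum]
    refine Finset.sum_congr rfl (fun i _ => ?_)
    rw [map_sum]
    exact Finset.sum_congr rfl (fun j _ => (map_smul _ _ _).symm)
  -- assemble everything
  rw [step3, hUx, hUy, step5, reorder]
  rw [Finset.sum_congr rfl (fun i hi => Finset.sum_congr rfl (fun j hj =>
    Finset.sum_congr rfl (fun q hq => col i hi j hj q hq)))]
  rw [Finset.sum_congr rfl (fun i hi => Finset.sum_congr rfl (fun j hj =>
    col2 i hi j hj))]
  exact step7.symm

end HomHopf


/-- In a Hom-Hopf algebra `(H, μ, Δ, ε, S, α)`, the antipode `S` is an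
anti-algebra map and an anti-coalgebra map:
`S(gh) = S(h)S(g)`, `S(1) = 1`, `Δ(S(h)) = S(h₂) ⊗ S(h₁)` and `ε ∘ S = ε`. -/
theorem antipode_anti_hom {k : Type u} {H : Type v} [Field k] [AddCommGroup H] [Module k H]
    (HH : HomHopf k H) :
    (∀ g h : H, HH.S (HH.mul g h) = HH.mul (HH.S h) (HH.S g)) ∧
    (HH.S HH.one = HH.one) ∧
    (∀ h : H, HH.comul (HH.S h) = ∑ i ∈ HH.T h, HH.S (HH.d2 h i) ⊗ₜ[k] HH.S (HH.d1 h i)) ∧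
    (∀ h : H, HH.counit (HH.S h) = HH.counit h) := by
  refine ⟨?_, HH.S_one, ?_, HH.counit_S⟩
  · intro g h
    have key := HH.S_nmu (HH.α g) (HH.α h)
    have e1 : HH.nmu (HH.α g) (HH.α h) = HH.mul g h := by
      simp [HomHopf.nmu_apply]
    have e2 : HH.nmu (HH.S (HH.α h)) (HH.S (HH.α g)) = HH.mul (HH.S h) (HH.S g) := by
      simp [HomHopf.nmu_apply, HH.S_α]
    rw [e1, e2] at key
    exact key
  · intro h
    have key := HH.nD_S (HH.α h)
    have e1 : HH.nD (HH.S (HH.α h)) = HH.comul (HH.S h) := by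
      rw [HomHopf.nD_apply, HH.S_α]
      simp
    have e2 : HH.Gp (HH.α h)
        = ∑ i ∈ HH.T h, HH.S (HH.d2 h i) ⊗ₜ[k] HH.S (HH.d1 h i) := by
      rw [HomHopf.Gp, LinearMap.comp_apply, LinearMap.comp_apply]
      have : HH.nD (HH.α h) = HH.comul h := by simp
      rw [LinearEquiv.coe_coe, this, HH.repr h, map_sum, map_sum]
      simp
    rw [e1, e2] at key
    exact key
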